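/- Under the iterate hypotheses, suppose further that q̃_h(s,a) ≥ 0 for all h,s,a and that Σ_{b∈A} q̃_h(s,b) > 0 for all h,s, and define the policy π̃ by π̃_h(a|s) = q̃_h(s,a) / Σ_{b∈A} q̃_h(s,b). Then for every feasible occupancy measure q* ∈ Δ with D(q*) ≤ l, the expected objective cost of π̃ is nearly optimal: C(q^{π̃}) ≤ C(q*) + C̄·(2H+3)·ε_oe + R/T + ε_br + ε_est, where ε_est = (C̄ + B·D̄)·ε_oe. -/

import Mathlib

/-- ℓ¹ norm Σ_{h,s,a} |·| on functions {0,…,H} × S × A → ℝ. -/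
def l1norm {S A : Type*} [Fintype S] [Fintype A] (H : ℕ) (q : ℕ → S → A → ℝ) : ℝ :=
  ∑ h ∈ Finset.range (H + 1), ∑ s : S, ∑ a : A, |q h s a|

/-- Weighted total cost Σ_{h,s,a} q_h(s,a) c_h(s,a). -/
def costVal {S A : Type*} [Fintype S] [Fintype A] (H : ℕ) (c q : ℕ → S → A → ℝ) : ℝ :=
  ∑ h ∈ Finset.range (H + 1), ∑ s : S, ∑ a : A, q h s a * c h s a

/-- Lagrangian L(q, λ) = C(q) + λ[1]·(D(q) − l). -/
def lagrangian {S A : Type*} [Fintype S] [Fintype A] (H : ℕ) (c d : ℕ → S → A → ℝ)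
    (l : ℝ) (q : ℕ → S → A → ℝ) (lam : ℝ × ℝ) : ℝ :=
  costVal H c q + lam.1 * (costVal H d q - l)

/-- q ∈ Δ: the linear constraints defining occupancy measures of the finite-horizon MDP
with horizon H, initial state s0 and transition kernel p (where `p h s a s'` is the
probability of moving to `s'` from `s` under `a` at step `h`). -/
def IsOccupancy {S A : Type*} [Fintype S] [Fintype A] [DecidableEq S] (H : ℕ) (s0 : S)
    (p : ℕ → S → A → S → ℝ) (q : ℕ → S → A → ℝ) : Prop :=
  (∀ h ≤ H, ∀ (s : S) (a : A), 0 ≤ q h s a) ∧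
  (∀ s : S, ∑ a : A, q 0 s a = if s = s0 then 1 else 0) ∧
  (∀ h < H, ∀ s : S, ∑ a : A, q (h + 1) s a = ∑ s' : S, ∑ a' : A, p h s' a' s * q h s' a')

/-- A policy: `π h s a` is the probability of action `a` at state `s`, step `h`. -/
def IsPolicy {S A : Type*} [Fintype A] (H : ℕ) (π : ℕ → S → A → ℝ) : Prop :=
  ∀ h ≤ H, ∀ s : S, (∀ a : A, 0 ≤ π h s a) ∧ ∑ a : A, π h s a = 1

/-- The occupancy measure q^π of a policy π, defined recursively. -/
def occMeasure {S A : Type*} [Fintype S] [Fintype A] [DecidableEq S] (s0 : S)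
    (p : ℕ → S → A → S → ℝ) (π : ℕ → S → A → ℝ) : ℕ → S → A → ℝ
  | 0 => fun s a => if s = s0 then π 0 s a else 0
  | (h + 1) => fun s a =>
      π (h + 1) s a * ∑ s' : S, ∑ a' : A, p h s' a' s * occMeasure s0 p π h s' a'

section Helpers

open Finset

lemma l1norm_nonneg' {S A : Type*} [Fintype S] [Fintype A] (H : ℕ) (q : ℕ → S → A → ℝ) :
    0 ≤ l1norm H q := by
  unfold l1norm; positivity

lemma l1norm_sub_comm' {S A : Type*} [Fintype S] [Fintype A] (H : ℕ) (q q' : ℕ → S → A → ℝ) :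
    l1norm H (fun h s a => q h s a - q' h s a) = l1norm H (fun h s a => q' h s a - q h s a) := by
  unfold l1norm
  simp only [abs_sub_comm]

lemma costVal_lip' {S A : Type*} [Fintype S] [Fintype A] (H : ℕ) (c : ℕ → S → A → ℝ)
    (Cbar : ℝ) (hc : ∀ h ≤ H, ∀ (s : S) (a : A), 0 ≤ c h s a ∧ c h s a ≤ Cbar)
    (q q' : ℕ → S → A → ℝ) :
    costVal H c q ≤ costVal H c q' + Cbar * l1norm H (fun h s a => q h s a - q' h s a) := by
  have key : costVal H c q - costVal H c q'
      ≤ Cbar * l1norm H (fun h s a => q h s a - q' h s a) := by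
    unfold costVal l1norm
    rw [Finset.mul_sum, ← Finset.sum_sub_distrib]
    refine Finset.sum_le_sum fun h hh => ?_
    rw [Finset.mul_sum, ← Finset.sum_sub_distrib]
    refine Finset.sum_le_sum fun s _ => ?_
    rw [Finset.mul_sum, ← Finset.sum_sub_distrib]
    refine Finset.sum_le_sum fun a _ => ?_
    have hc' := hc h (Finset.mem_range_succ_iff.mp hh) s a
    have e1 : q h s a * c h s a - q' h s a * c h s a = (q h s a - q' h s a) * c h s a := by ring
    rw [e1]
    calc (q h s a - q' h s a) * c h s a ≤ |(q h s a - q' h s a) * c h s a| := le_abs_self _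
      _ = |q h s a - q' h s a| * c h s a := by rw [abs_mul, abs_of_nonneg hc'.1]
      _ ≤ |q h s a - q' h s a| * Cbar := mul_le_mul_of_nonneg_left hc'.2 (abs_nonneg _)
      _ = Cbar * |q h s a - q' h s a| := mul_comm _ _
  linarith

lemma sum_swap3' {ι₁ ι₂ ι₃ : Type*} (s₁ : Finset ι₁) (s₂ : Finset ι₂) (s₃ : Finset ι₃)
    (f : ι₁ → ι₂ → ι₃ → ℝ) :
    ∑ a ∈ s₁, ∑ b ∈ s₂, ∑ c ∈ s₃, f a b c = ∑ c ∈ s₃, ∑ a ∈ s₁, ∑ b ∈ s₂, f a b c := by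
  calc ∑ a ∈ s₁, ∑ b ∈ s₂, ∑ c ∈ s₃, f a b c
      = ∑ a ∈ s₁, ∑ c ∈ s₃, ∑ b ∈ s₂, f a b c :=
        Finset.sum_congr rfl fun a _ => Finset.sum_comm
    _ = ∑ c ∈ s₃, ∑ a ∈ s₁, ∑ b ∈ s₂, f a b c := Finset.sum_comm

lemma sum_swap4' {ι₁ ι₂ ι₃ ι₄ : Type*} (s₁ : Finset ι₁) (s₂ : Finset ι₂) (s₃ : Finset ι₃)
    (s₄ : Finset ι₄) (f : ι₁ → ι₂ → ι₃ → ι₄ → ℝ) :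
    ∑ a ∈ s₁, ∑ b ∈ s₂, ∑ c ∈ s₃, ∑ d ∈ s₄, f a b c d
      = ∑ d ∈ s₄, ∑ a ∈ s₁, ∑ b ∈ s₂, ∑ c ∈ s₃, f a b c d := by
  calc ∑ a ∈ s₁, ∑ b ∈ s₂, ∑ c ∈ s₃, ∑ d ∈ s₄, f a b c d
      = ∑ a ∈ s₁, ∑ d ∈ s₄, ∑ b ∈ s₂, ∑ c ∈ s₃, f a b c d :=
        Finset.sum_congr rfl fun a _ => sum_swap3' _ _ _ _
    _ = ∑ d ∈ s₄, ∑ a ∈ s₁, ∑ b ∈ s₂, ∑ c ∈ s₃, f a b c d := Finset.sum_comm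

end Helpers

theorem stmt9 {S A : Type*} [Fintype S] [Fintype A] [DecidableEq S] [Nonempty S] [Nonempty A]
    (H : ℕ) (s0 : S) (p : ℕ → S → A → S → ℝ)
    (hp : ∀ h < H, ∀ (s : S) (a : A), (∀ s' : S, 0 ≤ p h s a s') ∧ ∑ s' : S, p h s a s' = 1)
    (c d : ℕ → S → A → ℝ) (Cbar Dbar : ℝ)
    (hc : ∀ h ≤ H, ∀ (s : S) (a : A), 0 ≤ c h s a ∧ c h s a ≤ Cbar)
    (hd : ∀ h ≤ H, ∀ (s : S) (a : A), 0 ≤ d h s a ∧ d h s a ≤ Dbar)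
    (l B : ℝ) (hB : 0 < B) (T : ℕ) (hT : 1 ≤ T)
    (εbr εoe R : ℝ) (hεbr : 0 ≤ εbr) (hεoe : 0 ≤ εoe) (hR : 0 ≤ R)
    (qt qhat : ℕ → ℕ → S → A → ℝ) (lam : ℕ → ℝ × ℝ)
    (hqt : ∀ t < T, IsOccupancy H s0 p (qt t))
    (hqhat : ∀ t < T, l1norm H (fun h s a => qt t h s a - qhat t h s a) ≤ εoe)
    (hlam : ∀ t < T, 0 ≤ (lam t).1 ∧ 0 ≤ (lam t).2 ∧ (lam t).1 + (lam t).2 = B)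
    (hbr : ∀ t < T, ∀ q : ℕ → S → A → ℝ, IsOccupancy H s0 p q →
      lagrangian H c d l (qt t) (lam t) ≤ lagrangian H c d l q (lam t) + εbr)
    (hnr : ∀ μ : ℝ × ℝ, 0 ≤ μ.1 → 0 ≤ μ.2 → μ.1 + μ.2 = B →
      (∑ t ∈ Finset.range T, lagrangian H c d l (qhat t) μ) -
        (∑ t ∈ Finset.range T, lagrangian H c d l (qhat t) (lam t)) ≤ R)
    (qtil : ℕ → S → A → ℝ)
    (hqtil : qtil = fun h s a => (∑ t ∈ Finset.range T, qhat t h s a) / T)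
    (hpos : ∀ h ≤ H, ∀ (s : S) (a : A), 0 ≤ qtil h s a)
    (hsum : ∀ h ≤ H, ∀ s : S, 0 < ∑ b : A, qtil h s b)
    (εest : ℝ) (hεest : εest = (Cbar + B * Dbar) * εoe) :
    ∀ qstar : ℕ → S → A → ℝ, IsOccupancy H s0 p qstar → costVal H d qstar ≤ l →
      costVal H c (occMeasure s0 p (fun h s a => qtil h s a / ∑ b : A, qtil h s b)) ≤
        costVal H c qstar + Cbar * (2 * (H : ℝ) + 3) * εoe + R / T + εbr + εest := by
  intro qstar hqstar hDstar
  classical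
  have hT0 : (0:ℝ) < (T:ℝ) := by
    have : 0 < T := lt_of_lt_of_le Nat.zero_lt_one hT
    exact_mod_cast this
  have hT0' : (T:ℝ) ≠ 0 := ne_of_gt hT0
  obtain ⟨s1⟩ := (inferInstance : Nonempty S)
  obtain ⟨a1⟩ := (inferInstance : Nonempty A)
  have hCbar : 0 ≤ Cbar := le_trans (hc 0 (Nat.zero_le H) s1 a1).1 (hc 0 (Nat.zero_le H) s1 a1).2
  have hDbar : 0 ≤ Dbar := le_trans (hd 0 (Nat.zero_le H) s1 a1).1 (hd 0 (Nat.zero_le H) s1 a1).2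
  -- the averaged true occupancy measure
  set qbar : ℕ → S → A → ℝ := fun h s a => (∑ t ∈ Finset.range T, qt t h s a) / T with hqbardef
  have hbar0 : ∀ s : S, ∑ a : A, qbar 0 s a = if s = s0 then 1 else 0 := by
    intro s
    simp only [hqbardef, div_eq_mul_inv, ← Finset.sum_mul]
    rw [Finset.sum_comm]
    rw [Finset.sum_congr rfl fun t ht => (hqt t (Finset.mem_range.mp ht)).2.1 s]
    rw [Finset.sum_const, Finset.card_range, nsmul_eq_mul,
      mul_comm (T:ℝ) _, mul_assoc, mul_inv_cancel₀ hT0', mul_one]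
  have hbarflow : ∀ h < H, ∀ s : S,
      ∑ a : A, qbar (h+1) s a = ∑ s' : S, ∑ a' : A, p h s' a' s * qbar h s' a' := by
    intro h hh s
    simp only [hqbardef, div_eq_mul_inv, ← mul_assoc, Finset.mul_sum, ← Finset.sum_mul]
    congr 1
    rw [Finset.sum_comm, sum_swap3' Finset.univ Finset.univ (Finset.range T)]
    exact Finset.sum_congr rfl fun t ht => (hqt t (Finset.mem_range.mp ht)).2.2 h hh s
  -- ℓ¹ distance between qtil and qbar
  have hE : l1norm H (fun h s a => qtil h s a - qbar h s a) ≤ εoe := by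
    have key : ∀ h (s : S) (a : A), |qtil h s a - qbar h s a|
        ≤ (∑ t ∈ Finset.range T, |qt t h s a - qhat t h s a|) / T := by
      intro h s a
      calc |qtil h s a - qbar h s a|
          = |∑ t ∈ Finset.range T, (qhat t h s a - qt t h s a)| / T := by
            rw [hqtil]
            simp only [hqbardef]
            rw [div_sub_div_same, ← Finset.sum_sub_distrib, abs_div, abs_of_pos hT0]
        _ ≤ (∑ t ∈ Finset.range T, |qt t h s a - qhat t h s a|) / T := by
            gcongr
            refine (Finset.abs_sum_le_sum_abs _ _).trans (le_of_eq ?_)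
            exact Finset.sum_congr rfl fun t _ => abs_sub_comm _ _
    calc l1norm H (fun h s a => qtil h s a - qbar h s a)
        ≤ ∑ h ∈ Finset.range (H+1), ∑ s : S, ∑ a : A,
            (∑ t ∈ Finset.range T, |qt t h s a - qhat t h s a|) / T := by
          unfold l1norm
          exact Finset.sum_le_sum fun h _ => Finset.sum_le_sum fun s _ =>
            Finset.sum_le_sum fun a _ => key h s a
      _ = (∑ t ∈ Finset.range T, l1norm H (fun h s a => qt t h s a - qhat t h s a)) / T := by
          unfold l1norm
          simp only [div_eq_mul_inv, ← Finset.sum_mul]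
          congr 1
          exact sum_swap4' _ _ _ _ _
      _ ≤ ((T:ℝ) * εoe) / T := by
          gcongr
          calc ∑ t ∈ Finset.range T, l1norm H (fun h s a => qt t h s a - qhat t h s a)
              ≤ ∑ _t ∈ Finset.range T, εoe :=
                Finset.sum_le_sum fun t ht => hqhat t (Finset.mem_range.mp ht)
            _ = (T:ℝ) * εoe := by rw [Finset.sum_const, Finset.card_range, nsmul_eq_mul]
      _ = εoe := by field_simp
  -- linearity of cost under averaging
  have hCsum : ∑ t ∈ Finset.range T, costVal H c (qhat t) = (T:ℝ) * costVal H c qtil := by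
    unfold costVal
    rw [Finset.mul_sum]
    rw [← sum_swap4' (Finset.range (H+1)) Finset.univ Finset.univ (Finset.range T)
      (fun h s a t => qhat t h s a * c h s a)]
    refine Finset.sum_congr rfl fun h _ => ?_
    rw [Finset.mul_sum]
    refine Finset.sum_congr rfl fun s _ => ?_
    rw [Finset.mul_sum]
    refine Finset.sum_congr rfl fun a _ => ?_
    rw [← Finset.sum_mul, hqtil]
    field_simp
  -- no-regret specialized to μ = (0, B)
  have hnr0 := hnr (0, B) le_rfl hB.le (by simp)
  have hlag0 : ∀ q : ℕ → S → A → ℝ, lagrangian H c d l q (0, B) = costVal H c q := by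
    intro q; simp [lagrangian]
  simp only [hlag0] at hnr0
  -- per-round bound on the Lagrangian at the played λ
  have hstep5 : ∀ t < T, lagrangian H c d l (qhat t) (lam t)
      ≤ costVal H c qstar + εbr + εest := by
    intro t ht
    obtain ⟨hl1, hl2, hl12⟩ := hlam t ht
    have hoe : l1norm H (fun h s a => qhat t h s a - qt t h s a) ≤ εoe := by
      rw [l1norm_sub_comm']; exact hqhat t ht
    have hC := costVal_lip' H c Cbar hc (qhat t) (qt t)
    have hD := costVal_lip' H d Dbar hd (qhat t) (qt t)
    have hCb : costVal H c (qhat t) ≤ costVal H c (qt t) + Cbar * εoe := by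
      have := mul_le_mul_of_nonneg_left hoe hCbar
      linarith
    have hDb : costVal H d (qhat t) ≤ costVal H d (qt t) + Dbar * εoe := by
      have := mul_le_mul_of_nonneg_left hoe hDbar
      linarith
    have hbr' := hbr t ht qstar hqstar
    have h6 : lagrangian H c d l (qt t) (lam t) ≤ costVal H c qstar + εbr := by
      have hnp : (lam t).1 * (costVal H d qstar - l) ≤ 0 :=
        mul_nonpos_of_nonneg_of_nonpos hl1 (by linarith)
      unfold lagrangian at hbr' ⊢
      linarith
    have h8 : (lam t).1 * (costVal H d (qhat t) - l)
        ≤ (lam t).1 * (costVal H d (qt t) - l) + B * (Dbar * εoe) := by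
      have e1 : (lam t).1 * (costVal H d (qhat t) - l)
          ≤ (lam t).1 * ((costVal H d (qt t) - l) + Dbar * εoe) :=
        mul_le_mul_of_nonneg_left (by linarith) hl1
      rw [mul_add] at e1
      have e2 : (lam t).1 * (Dbar * εoe) ≤ B * (Dbar * εoe) :=
        mul_le_mul_of_nonneg_right (by linarith) (mul_nonneg hDbar hεoe)
      linarith
    have hεe : εest = Cbar * εoe + B * (Dbar * εoe) := by rw [hεest]; ring
    unfold lagrangian at h6 ⊢
    linarith
  have hsum5 : ∑ t ∈ Finset.range T, lagrangian H c d l (qhat t) (lam t)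
      ≤ (T:ℝ) * (costVal H c qstar + εbr + εest) := by
    calc ∑ t ∈ Finset.range T, lagrangian H c d l (qhat t) (lam t)
        ≤ ∑ _t ∈ Finset.range T, (costVal H c qstar + εbr + εest) :=
          Finset.sum_le_sum fun t ht => hstep5 t (Finset.mem_range.mp ht)
      _ = (T:ℝ) * (costVal H c qstar + εbr + εest) := by
          rw [Finset.sum_const, Finset.card_range, nsmul_eq_mul]
  have hfinal1 : costVal H c qtil ≤ costVal H c qstar + εbr + εest + R / T := by
    have h9 : (T:ℝ) * costVal H c qtil
        ≤ (T:ℝ) * (costVal H c qstar + εbr + εest) + R := by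
      rw [← hCsum]; linarith
    have h10 : costVal H c qtil
        ≤ ((T:ℝ) * (costVal H c qstar + εbr + εest) + R) / T := by
      rw [le_div_iff₀ hT0]; linarith [h9]
    calc costVal H c qtil ≤ ((T:ℝ) * (costVal H c qstar + εbr + εest) + R) / T := h10
      _ = costVal H c qstar + εbr + εest + R / T := by
        field_simp
  -- the policy and its occupancy measure
  set π : ℕ → S → A → ℝ := fun h s a => qtil h s a / ∑ b : A, qtil h s b with hπdef
  set qpi : ℕ → S → A → ℝ := occMeasure s0 p π with hqpidef
  have hπnn : ∀ h ≤ H, ∀ (s : S) (a : A), 0 ≤ π h s a := by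
    intro h hh s a
    simp only [hπdef]
    exact div_nonneg (hpos h hh s a) (hsum h hh s).le
  have hπsum : ∀ h ≤ H, ∀ s : S, ∑ a : A, π h s a = 1 := by
    intro h hh s
    simp only [hπdef]
    rw [← Finset.sum_div, div_self (ne_of_gt (hsum h hh s))]
  set νt : ℕ → S → ℝ := fun h s => ∑ a : A, qtil h s a with hνtdef
  set ν : ℕ → S → ℝ := fun h s => ∑ a : A, qpi h s a with hνdef
  have hfacq : ∀ h ≤ H, ∀ (s : S) (a : A), qtil h s a = π h s a * νt h s := by
    intro h hh s a
    simp only [hπdef, hνtdef]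
    rw [div_mul_cancel₀ _ (ne_of_gt (hsum h hh s))]
  have hν0 : ∀ s : S, ν 0 s = if s = s0 then 1 else 0 := by
    intro s
    simp only [hνdef, hqpidef]
    have e : ∀ a : A, occMeasure s0 p π 0 s a = if s = s0 then π 0 s a else 0 := fun a => rfl
    rw [Finset.sum_congr rfl fun a _ => e a]
    by_cases hs : s = s0
    · simp only [hs, if_true]
      exact hπsum 0 (Nat.zero_le H) s0
    · simp only [hs, if_false, Finset.sum_const_zero]
  have hνsucc : ∀ n, n + 1 ≤ H → ∀ s : S,
      ν (n+1) s = ∑ s' : S, ∑ a' : A, p n s' a' s * qpi n s' a' := by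
    intro n hh s
    simp only [hνdef, hqpidef]
    have e : ∀ a : A, occMeasure s0 p π (n+1) s a
        = π (n+1) s a * ∑ s' : S, ∑ a' : A, p n s' a' s * occMeasure s0 p π n s' a' :=
      fun a => rfl
    rw [Finset.sum_congr rfl fun a _ => e a, ← Finset.sum_mul, hπsum (n+1) hh s, one_mul]
  have hfacpi : ∀ h ≤ H, ∀ (s : S) (a : A), qpi h s a = π h s a * ν h s := by
    intro h hh s a
    match h with
    | 0 =>
      rw [hν0 s]
      simp only [hqpidef]
      have e : occMeasure s0 p π 0 s a = if s = s0 then π 0 s a else 0 := rfl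
      rw [e]
      by_cases hs : s = s0 <;> simp [hs]
    | (k+1) =>
      rw [hνsucc k hh s]
      simp only [hqpidef]
      rfl
  set E : ℕ → ℝ := fun j => ∑ s : S, ∑ a : A, |qtil j s a - qbar j s a| with hEdef
  have hEnn : ∀ j, 0 ≤ E j := by
    intro j; simp only [hEdef]; positivity
  have hEsub : ∀ m ≤ H + 1, ∑ j ∈ Finset.range m, E j ≤ εoe := by
    intro m hm
    calc ∑ j ∈ Finset.range m, E j ≤ ∑ j ∈ Finset.range (H+1), E j :=
        Finset.sum_le_sum_of_subset_of_nonneg (Finset.range_subset_range.mpr hm)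
          (fun j _ _ => hEnn j)
      _ = l1norm H (fun h s a => qtil h s a - qbar h s a) := by
          simp only [hEdef]; rfl
      _ ≤ εoe := hE
  have hlevel : ∀ h ≤ H,
      ∑ s : S, ∑ a : A, |qpi h s a - qtil h s a| = ∑ s : S, |ν h s - νt h s| := by
    intro h hh
    refine Finset.sum_congr rfl fun s _ => ?_
    have e : ∀ a : A, |qpi h s a - qtil h s a| = π h s a * |ν h s - νt h s| := by
      intro a
      rw [hfacpi h hh s a, hfacq h hh s a, ← mul_sub, abs_mul,
        abs_of_nonneg (hπnn h hh s a)]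
    rw [Finset.sum_congr rfl fun a _ => e a, ← Finset.sum_mul, hπsum h hh s, one_mul]
  have hind : ∀ h ≤ H, ∑ s : S, |ν h s - νt h s|
      ≤ (∑ j ∈ Finset.range (h+1), E j) + ∑ j ∈ Finset.range h, E j := by
    intro h
    induction h with
    | zero =>
      intro _
      have step : ∑ s : S, |ν 0 s - νt 0 s| ≤ E 0 := by
        calc ∑ s : S, |ν 0 s - νt 0 s|
            = ∑ s : S, |∑ a : A, (qbar 0 s a - qtil 0 s a)| := by
              refine Finset.sum_congr rfl fun s _ => ?_
              rw [hν0 s, ← hbar0 s]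
              simp only [hνtdef]
              rw [Finset.sum_sub_distrib]
          _ ≤ ∑ s : S, ∑ a : A, |qbar 0 s a - qtil 0 s a| :=
              Finset.sum_le_sum fun s _ => Finset.abs_sum_le_sum_abs _ _
          _ = E 0 := by
              simp only [hEdef]
              exact Finset.sum_congr rfl fun s _ => Finset.sum_congr rfl fun a _ =>
                abs_sub_comm _ _
      simpa using step
    | succ n ih =>
      intro hh
      have hnH : n < H := Nat.lt_of_succ_le hh
      have IH := ih (Nat.le_of_lt hnH)
      have hptw : ∀ s : S, |ν (n+1) s - νt (n+1) s|
          ≤ (∑ s' : S, ∑ a' : A, p n s' a' s * |qpi n s' a' - qbar n s' a'|)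
            + |(∑ s' : S, ∑ a' : A, p n s' a' s * qbar n s' a') - νt (n+1) s| := by
        intro s
        have h1 : |ν (n+1) s - ∑ s' : S, ∑ a' : A, p n s' a' s * qbar n s' a'|
            ≤ ∑ s' : S, ∑ a' : A, p n s' a' s * |qpi n s' a' - qbar n s' a'| := by
          rw [hνsucc n hh s, ← Finset.sum_sub_distrib]
          refine (Finset.abs_sum_le_sum_abs _ _).trans (Finset.sum_le_sum fun s' _ => ?_)
          rw [← Finset.sum_sub_distrib]
          refine (Finset.abs_sum_le_sum_abs _ _).trans (Finset.sum_le_sum fun a' _ => ?_)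
          rw [← mul_sub, abs_mul, abs_of_nonneg ((hp n hnH s' a').1 s)]
        calc |ν (n+1) s - νt (n+1) s|
            ≤ |ν (n+1) s - ∑ s' : S, ∑ a' : A, p n s' a' s * qbar n s' a'|
              + |(∑ s' : S, ∑ a' : A, p n s' a' s * qbar n s' a') - νt (n+1) s| :=
              abs_sub_le _ _ _
          _ ≤ _ := add_le_add_left h1 _
      have hsum1 : ∑ s : S, ∑ s' : S, ∑ a' : A, p n s' a' s * |qpi n s' a' - qbar n s' a'|
          = ∑ s' : S, ∑ a' : A, |qpi n s' a' - qbar n s' a'| := by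
        rw [Finset.sum_comm]
        refine Finset.sum_congr rfl fun s' _ => ?_
        rw [Finset.sum_comm]
        refine Finset.sum_congr rfl fun a' _ => ?_
        rw [← Finset.sum_mul, (hp n hnH s' a').2, one_mul]
      have hsum2 : ∑ s : S, |(∑ s' : S, ∑ a' : A, p n s' a' s * qbar n s' a') - νt (n+1) s|
          ≤ E (n+1) := by
        calc ∑ s : S, |(∑ s' : S, ∑ a' : A, p n s' a' s * qbar n s' a') - νt (n+1) s|
            = ∑ s : S, |∑ a : A, (qbar (n+1) s a - qtil (n+1) s a)| := by
              refine Finset.sum_congr rfl fun s _ => ?_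
              rw [← hbarflow n hnH s]
              simp only [hνtdef]
              rw [Finset.sum_sub_distrib]
          _ ≤ ∑ s : S, ∑ a : A, |qbar (n+1) s a - qtil (n+1) s a| :=
              Finset.sum_le_sum fun s _ => Finset.abs_sum_le_sum_abs _ _
          _ = E (n+1) := by
              simp only [hEdef]
              exact Finset.sum_congr rfl fun s _ => Finset.sum_congr rfl fun a _ =>
                abs_sub_comm _ _
      have hsum3 : ∑ s' : S, ∑ a' : A, |qpi n s' a' - qbar n s' a'|
          ≤ (∑ s : S, |ν n s - νt n s|) + E n := by
        calc ∑ s' : S, ∑ a' : A, |qpi n s' a' - qbar n s' a'|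
            ≤ ∑ s' : S, ∑ a' : A,
                (|qpi n s' a' - qtil n s' a'| + |qtil n s' a' - qbar n s' a'|) :=
              Finset.sum_le_sum fun s' _ => Finset.sum_le_sum fun a' _ => abs_sub_le _ _ _
          _ = (∑ s' : S, ∑ a' : A, |qpi n s' a' - qtil n s' a'|)
              + ∑ s' : S, ∑ a' : A, |qtil n s' a' - qbar n s' a'| := by
              simp only [Finset.sum_add_distrib]
          _ = (∑ s : S, |ν n s - νt n s|) + E n := by
              rw [hlevel n (Nat.le_of_lt hnH)]
      have htot := Finset.sum_le_sum fun s (_ : s ∈ (Finset.univ : Finset S)) => hptw s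
      rw [Finset.sum_add_distrib, hsum1] at htot
      rw [Finset.sum_range_succ] at IH ⊢
      rw [Finset.sum_range_succ]
      linarith [htot, hsum2, hsum3, IH]
  have hl1pi : l1norm H (fun h s a => qpi h s a - qtil h s a) ≤ (2*(H:ℝ)+2) * εoe := by
    unfold l1norm
    calc ∑ h ∈ Finset.range (H+1), ∑ s : S, ∑ a : A, |qpi h s a - qtil h s a|
        = ∑ h ∈ Finset.range (H+1), ∑ s : S, |ν h s - νt h s| :=
          Finset.sum_congr rfl fun h hh => hlevel h (Finset.mem_range_succ_iff.mp hh)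
      _ ≤ ∑ _h ∈ Finset.range (H+1), (εoe + εoe) := by
          refine Finset.sum_le_sum fun h hh => ?_
          have hhH := Finset.mem_range_succ_iff.mp hh
          refine (hind h hhH).trans ?_
          have e1 := hEsub (h+1) (by omega)
          have e2 := hEsub h (by omega)
          linarith
      _ = (2*(H:ℝ)+2) * εoe := by
          rw [Finset.sum_const, Finset.card_range, nsmul_eq_mul]
          push_cast
          ring
  have hfinal2 := costVal_lip' H c Cbar hc qpi qtil
  have hmul := mul_le_mul_of_nonneg_left hl1pi hCbar
  nlinarith [mul_nonneg hCbar hεoe, hfinal1, hfinal2, hmul]
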